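/- Let A ∈ ℝ^{n×n}, B ∈ ℝ^{n×m} be constant matrices, and let Q : ℝ → ℝ^{n×n}, S : ℝ → ℝ^{n×m}, R : ℝ → ℝ^{m×m}, q : ℝ → ℝⁿ, r : ℝ → ℝᵐ with R(t) invertible for every t. Suppose P : ℝ → ℝ^{n×n}, p : ℝ → ℝⁿ, and x̃ : ℝ → ℝⁿ are differentiable and satisfy, for all t: (i) −P′(t) = Q(t) + AᵀP(t) + P(t)A − (P(t)B + S(t))R(t)⁻¹(BᵀP(t) + S(t)ᵀ); (ii) −p′(t) = q(t) + Aᵀp(t) − (P(t)B + S(t))R(t)⁻¹(Bᵀp(t) + r(t)); (iii) x̃′(t) = (A − B R(t)⁻¹(BᵀP(t) + S(t)ᵀ)) x̃(t) − B R(t)⁻¹(Bᵀp(t) + r(t)). Define λ(t) = P(t)x̃(t) + p(t) and ũ(t) = −R(t)⁻¹(r(t) + Bᵀλ(t) + S(t)ᵀx̃(t)). Then for all t: (a) x̃′(t) = A x̃(t) + B ũ(t); (b) λ is differentiable with −λ′(t) = Q(t)x̃(t) + S(t)ũ(t) + Aᵀλ(t) + q(t); and (c) S(t)ᵀx̃(t)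 + R(t)ũ(t) + Bᵀλ(t) + r(t) = 0. -/

import Mathlib

open Matrix

private theorem aux_mulVec_hasDerivAt {n k : ℕ} {M : ℝ → Matrix (Fin n) (Fin k) ℝ}
    {M' : Matrix (Fin n) (Fin k) ℝ} {v : ℝ → Fin k → ℝ} {v' : Fin k → ℝ} {t : ℝ}
    (hM : ∀ i j, HasDerivAt (fun τ => M τ i j) (M' i j) t)
    (hv : HasDerivAt v v' t) :
    HasDerivAt (fun τ => (M τ).mulVec (v τ)) (M'.mulVec (v t) + (M t).mulVec v') t := by
  rw [hasDerivAt_pi]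
  intro i
  have h : ∀ j ∈ Finset.univ, HasDerivAt (fun τ => M τ i j * v τ j)
      (M' i j * v t j + M t i j * v' j) t :=
    fun j _ => (hM i j).mul (hasDerivAt_pi.mp hv j)
  have := HasDerivAt.fun_sum h
  simpa [Matrix.mulVec, dotProduct, Finset.sum_add_distrib] using this

/-- Riccati-based construction of the semi-smooth Newton step: if `P`, `p` solve the
differential Riccati equations and `x̃` solves the closed-loop state equation, then
`λ = P x̃ + p` and `ũ = -R⁻¹(r + Bᵀλ + Sᵀx̃)` satisfy the dynamics, the costate
equation, and the stationarity condition of the Newton-step two-point boundary value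
problem. (Matrix-valued derivatives are taken entrywise.) -/
theorem riccati_solves_newton_step (n m : ℕ)
    (A : Matrix (Fin n) (Fin n) ℝ) (B : Matrix (Fin n) (Fin m) ℝ)
    (Q : ℝ → Matrix (Fin n) (Fin n) ℝ) (S : ℝ → Matrix (Fin n) (Fin m) ℝ)
    (R : ℝ → Matrix (Fin m) (Fin m) ℝ)
    (q : ℝ → Fin n → ℝ) (r : ℝ → Fin m → ℝ)
    (hR : ∀ t, IsUnit (R t))
    (P : ℝ → Matrix (Fin n) (Fin n) ℝ) (p : ℝ → Fin n → ℝ) (xt : ℝ → Fin n → ℝ)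
    (hP : ∀ t, ∀ i j, HasDerivAt (fun τ => P τ i j)
      ((-(Q t + Aᵀ * P t + P t * A - (P t * B + S t) * (R t)⁻¹ * (Bᵀ * P t + (S t)ᵀ))) i j) t)
    (hp : ∀ t, HasDerivAt p
      (-(q t + Aᵀ.mulVec (p t) - ((P t * B + S t) * (R t)⁻¹).mulVec (Bᵀ.mulVec (p t) + r t))) t)
    (hxt : ∀ t, HasDerivAt xt
      ((A - B * (R t)⁻¹ * (Bᵀ * P t + (S t)ᵀ)).mulVec (xt t)
        - (B * (R t)⁻¹).mulVec (Bᵀ.mulVec (p t) + r t)) t)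
    (lam : ℝ → Fin n → ℝ) (hlam : ∀ t, lam t = (P t).mulVec (xt t) + p t)
    (ut : ℝ → Fin m → ℝ)
    (hu : ∀ t, ut t = -(R t)⁻¹.mulVec (r t + Bᵀ.mulVec (lam t) + (S t)ᵀ.mulVec (xt t))) :
    (∀ t, HasDerivAt xt (A.mulVec (xt t) + B.mulVec (ut t)) t) ∧
    (∀ t, HasDerivAt lam
      (-((Q t).mulVec (xt t) + (S t).mulVec (ut t) + Aᵀ.mulVec (lam t) + q t)) t) ∧
    (∀ t, (S t)ᵀ.mulVec (xt t) + (R t).mulVec (ut t) + Bᵀ.mulVec (lam t) + r t = 0) := by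
  have hdet : ∀ t, R t * (R t)⁻¹ = 1 := fun t =>
    Matrix.mul_nonsing_inv _ ((Matrix.isUnit_iff_isUnit_det _).mp (hR t))
  have hl : lam = fun t => (P t).mulVec (xt t) + p t := funext hlam
  subst hl
  have hu' : ut = fun t => -(R t)⁻¹.mulVec (r t + Bᵀ.mulVec ((P t).mulVec (xt t) + p t)
      + (S t)ᵀ.mulVec (xt t)) := funext hu
  subst hu'
  refine ⟨fun t => ?_, fun t => ?_, fun t => ?_⟩
  · have key : (A - B * (R t)⁻¹ * (Bᵀ * P t + (S t)ᵀ)).mulVec (xt t)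
        - (B * (R t)⁻¹).mulVec (Bᵀ.mulVec (p t) + r t)
        = A.mulVec (xt t) + B.mulVec (-(R t)⁻¹.mulVec (r t
          + Bᵀ.mulVec ((P t).mulVec (xt t) + p t) + (S t)ᵀ.mulVec (xt t))) := by
      simp only [Matrix.sub_mulVec, Matrix.add_mulVec, Matrix.mulVec_add, Matrix.mulVec_sub,
        Matrix.mulVec_neg, ← Matrix.mulVec_mulVec]
      abel
    exact key ▸ hxt t
  · have hd := (aux_mulVec_hasDerivAt (hP t) (hxt t)).add (hp t)
    have key : (-(Q t + Aᵀ * P t + P t * A - (P t * B + S t) * (R t)⁻¹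
          * (Bᵀ * P t + (S t)ᵀ))).mulVec (xt t)
        + (P t).mulVec ((A - B * (R t)⁻¹ * (Bᵀ * P t + (S t)ᵀ)).mulVec (xt t)
          - (B * (R t)⁻¹).mulVec (Bᵀ.mulVec (p t) + r t))
        + -(q t + Aᵀ.mulVec (p t) - ((P t * B + S t) * (R t)⁻¹).mulVec (Bᵀ.mulVec (p t) + r t))
        = -((Q t).mulVec (xt t)
          + (S t).mulVec (-(R t)⁻¹.mulVec (r t + Bᵀ.mulVec ((P t).mulVec (xt t) + p t)
            + (S t)ᵀ.mulVec (xt t)))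
          + Aᵀ.mulVec ((P t).mulVec (xt t) + p t) + q t) := by
      simp only [Matrix.sub_mulVec, Matrix.add_mulVec, Matrix.mulVec_add, Matrix.mulVec_sub,
        Matrix.mulVec_neg, Matrix.neg_mulVec, ← Matrix.mulVec_mulVec, neg_add, neg_sub, neg_neg]
      abel
    exact key ▸ hd
  · have key : (R t).mulVec (-(R t)⁻¹.mulVec (r t + Bᵀ.mulVec ((P t).mulVec (xt t) + p t)
        + (S t)ᵀ.mulVec (xt t)))
        = -(r t + Bᵀ.mulVec ((P t).mulVec (xt t) + p t) + (S t)ᵀ.mulVec (xt t)) := by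
      rw [Matrix.mulVec_neg, Matrix.mulVec_mulVec, hdet t, Matrix.one_mulVec]
    rw [key]
    abel
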